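/- Let X ⊆ ℝⁿ be a polyhedron contained in an open set Ω, and let f : Ω → ℝ be locally Lipschitz continuous near x̄ ∈ X and twice semidifferentiable at x̄. Consider the statements: (a1) x̄ is a local minimizer of f on X; (a2) f'(x̄;v) ≥ 0 for all v ∈ T(x̄;X), and f⁽²⁾(x̄;v) ≥ 0 for all v ∈ T(x̄;X) with f'(x̄;v) = 0; (a3) f'(x̄;x−x̄) ≥ 0 for all x ∈ X, and f⁽²⁾(x̄;x−x̄) ≥ 0 for all x ∈ X \ {x̄} with f'(x̄;x−x̄) = 0; (b1) x̄ is a strong local minimizer of f on X; (b2) f'(x̄;v) ≥ 0 for all v ∈ T(x̄;X), and f⁽²⁾(x̄;v) > 0 for all nonzero v ∈ T(x̄;X) with f'(x̄;v) = 0; (b3) f'(x̄;x−x̄) ≥ 0 for all x ∈ X, and f⁽²⁾(x̄;x−x̄) > 0 for all x ∈ X \ {x̄} with f'(x̄;x−x̄) = 0. Then (b1) ⇔ (b2) ⇔ (b3) ⇒ (a1) ⇒ (a2) ⇔ (a3). -/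

import Mathlib

open Filter Topology Set

noncomputable section

/-- Euclidean norm on `Fin n → ℝ`. -/
def n2 {n : ℕ} (v : Fin n → ℝ) : ℝ := Real.sqrt (∑ i, v i ^ 2)

/-- A polyhedron `{x : Ax ≤ b}`. -/
def IsPolyhedron {n : ℕ} (S : Set (Fin n → ℝ)) : Prop :=
  ∃ (m : ℕ) (A : Matrix (Fin m) (Fin n) ℝ) (b : Fin m → ℝ),
    S = {x | ∀ i, (∑ j, A i j * x j) ≤ b i}

/-- The tangent cone of `S` at `x`. -/
def TangentCone {n : ℕ} (S : Set (Fin n → ℝ)) (x : Fin n → ℝ) : Set (Fin n → ℝ) :=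
  {v | ∃ (xs : ℕ → Fin n → ℝ) (τ : ℕ → ℝ),
    (∀ k, xs k ∈ S) ∧ Tendsto xs atTop (𝓝 x) ∧
    (∀ k, 0 < τ k) ∧ Tendsto τ atTop (𝓝 (0:ℝ)) ∧
    Tendsto (fun k => (τ k)⁻¹ • (xs k - x)) atTop (𝓝 v)}

/-- The semidifferentiability limit: `(f(x + τv') − f(x))/τ → d` as `v' → v`, `τ ↓ 0`. -/
def SemidiffLim {n : ℕ} (f : (Fin n → ℝ) → ℝ) (x v : Fin n → ℝ) (d : ℝ) : Prop :=
  Tendsto (fun p : (Fin n → ℝ) × ℝ => (f (x + p.2 • p.1) - f x) / p.2)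
    ((𝓝 v) ×ˢ (𝓝[>] 0)) (𝓝 d)

/-- The second-order semidifferentiability limit:
`2(f(x + τw') − f(x) − τ f'(x;w'))/τ² → d` as `w' → w`, `τ ↓ 0`. -/
def Semidiff2Lim {n : ℕ} (f : (Fin n → ℝ) → ℝ) (x : Fin n → ℝ)
    (f' : (Fin n → ℝ) → ℝ) (w : Fin n → ℝ) (d : ℝ) : Prop :=
  Tendsto (fun p : (Fin n → ℝ) × ℝ =>
      2 * (f (x + p.2 • p.1) - f x - p.2 * f' p.1) / p.2 ^ 2)
    ((𝓝 w) ×ˢ (𝓝[>] 0)) (𝓝 d)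

/-- Local minimizer of `f` on `X`. -/
def IsLocMin' {n : ℕ} (f : (Fin n → ℝ) → ℝ) (X : Set (Fin n → ℝ)) (xbar : Fin n → ℝ) : Prop :=
  xbar ∈ X ∧ ∃ ε > (0:ℝ), ∀ y ∈ X, n2 (y - xbar) < ε → f xbar ≤ f y

/-- Strong local minimizer of `f` on `X`. -/
def IsStrongLocMin {n : ℕ} (f : (Fin n → ℝ) → ℝ) (X : Set (Fin n → ℝ)) (xbar : Fin n → ℝ) : Prop :=
  xbar ∈ X ∧ ∃ c > (0:ℝ), ∃ ε > (0:ℝ), ∀ y ∈ X, n2 (y - xbar) < ε →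
    f xbar + c * n2 (y - xbar) ^ 2 ≤ f y


lemma n2_nonneg {n : ℕ} (v : Fin n → ℝ) : 0 ≤ n2 v := Real.sqrt_nonneg _

lemma n2_smul {n : ℕ} (t : ℝ) (v : Fin n → ℝ) : n2 (t • v) = |t| * n2 v := by
  unfold n2
  rw [← Real.sqrt_sq_eq_abs, ← Real.sqrt_mul (sq_nonneg t), Finset.mul_sum]
  congr 1; apply Finset.sum_congr rfl; intro i _
  simp [Pi.smul_apply, smul_eq_mul]; ring

lemma n2_zero {n : ℕ} : n2 (0 : Fin n → ℝ) = 0 := by simp [n2]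

lemma n2_eq_zero {n : ℕ} {v : Fin n → ℝ} (h : n2 v = 0) : v = 0 := by
  have hle := Real.sqrt_eq_zero'.mp h
  have hs : ∑ i, v i ^ 2 = 0 :=
    le_antisymm hle (Finset.sum_nonneg fun i _ => sq_nonneg (v i))
  funext i
  have := (Finset.sum_eq_zero_iff_of_nonneg (fun i _ => sq_nonneg (v i))).mp hs i (Finset.mem_univ i)
  simpa using pow_eq_zero_iff (n := 2) (by norm_num) |>.mp this

lemma n2_pos {n : ℕ} {v : Fin n → ℝ} (h : v ≠ 0) : 0 < n2 v := by
  rcases lt_or_eq_of_le (n2_nonneg v) with h' | h'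
  · exact h'
  · exact absurd (n2_eq_zero h'.symm) h

lemma norm_le_n2 {n : ℕ} (v : Fin n → ℝ) : ‖v‖ ≤ n2 v := by
  rw [pi_norm_le_iff_of_nonneg (n2_nonneg v)]
  intro i
  rw [Real.norm_eq_abs, ← Real.sqrt_sq_eq_abs]
  exact Real.sqrt_le_sqrt (Finset.single_le_sum (fun j _ => sq_nonneg (v j)) (Finset.mem_univ i))

lemma n2_continuous {n : ℕ} : Continuous (n2 (n := n)) :=
  Real.continuous_sqrt.comp (continuous_finset_sum _ fun i _ => (continuous_apply i).pow 2)

lemma tendsto_scale {n : ℕ} (l : ℝ) (hl : 0 < l) (v : Fin n → ℝ) :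
    Tendsto (fun p : (Fin n → ℝ) × ℝ => (l⁻¹ • p.1, l * p.2))
      ((𝓝 (l • v)) ×ˢ (𝓝[>] 0)) ((𝓝 v) ×ˢ (𝓝[>] 0)) := by
  apply Tendsto.prodMk
  · have : Tendsto (fun p : (Fin n → ℝ) × ℝ => l⁻¹ • p.1) ((𝓝 (l • v)) ×ˢ (𝓝[>] 0))
        (𝓝 (l⁻¹ • (l • v))) :=
      (continuous_const_smul l⁻¹).continuousAt.tendsto.comp tendsto_fst
    simpa [smul_smul, inv_mul_cancel₀ hl.ne'] using this
  · rw [tendsto_nhdsWithin_iff]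
    constructor
    · have : Tendsto (fun p : (Fin n → ℝ) × ℝ => l * p.2) ((𝓝 (l • v)) ×ˢ (𝓝[>] 0))
          (𝓝 (l * 0)) :=
        tendsto_const_nhds.mul (tendsto_snd.mono_right nhdsWithin_le_nhds)
      simpa using this
    · filter_upwards [prod_mem_prod univ_mem self_mem_nhdsWithin] with p hp
      exact mul_pos hl hp.2

lemma hom1 {n : ℕ} (f : (Fin n → ℝ) → ℝ) (xbar : Fin n → ℝ) (f1 : (Fin n → ℝ) → ℝ)
    (hf1 : ∀ v, SemidiffLim f xbar v (f1 v)) (l : ℝ) (hl : 0 < l) (v : Fin n → ℝ) :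
    f1 (l • v) = l * f1 v := by
  have h2 : Tendsto (fun p : (Fin n → ℝ) × ℝ => (f (xbar + p.2 • p.1) - f xbar) / p.2)
      ((𝓝 (l • v)) ×ˢ (𝓝[>] 0)) (𝓝 (l * f1 v)) := by
    have := ((hf1 v).comp (tendsto_scale l hl v)).const_mul l
    apply this.congr'
    filter_upwards [prod_mem_prod univ_mem self_mem_nhdsWithin] with p hp
    have hp2 : p.2 ≠ 0 := hp.2.ne'
    simp only [Function.comp]
    have heq : l * p.2 * l⁻¹ = p.2 := by field_simp
    rw [smul_smul, heq]
    field_simp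
  exact tendsto_nhds_unique (hf1 (l • v)) h2

lemma hom2 {n : ℕ} (f : (Fin n → ℝ) → ℝ) (xbar : Fin n → ℝ) (f1 f2 : (Fin n → ℝ) → ℝ)
    (hf1 : ∀ v, SemidiffLim f xbar v (f1 v))
    (hf2 : ∀ w, Semidiff2Lim f xbar f1 w (f2 w)) (l : ℝ) (hl : 0 < l) (v : Fin n → ℝ) :
    f2 (l • v) = l ^ 2 * f2 v := by
  have h2 : Tendsto (fun p : (Fin n → ℝ) × ℝ =>
      2 * (f (xbar + p.2 • p.1) - f xbar - p.2 * f1 p.1) / p.2 ^ 2)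
      ((𝓝 (l • v)) ×ˢ (𝓝[>] 0)) (𝓝 (l ^ 2 * f2 v)) := by
    have := ((hf2 v).comp (tendsto_scale l hl v)).const_mul (l ^ 2)
    apply this.congr'
    filter_upwards [prod_mem_prod univ_mem self_mem_nhdsWithin] with p hp
    have hp2 : p.2 ≠ 0 := hp.2.ne'
    simp only [Function.comp]
    have heq : l * p.2 * l⁻¹ = p.2 := by field_simp
    rw [smul_smul, heq, hom1 f xbar f1 hf1 l⁻¹ (inv_pos.mpr hl) p.1]
    field_simp
  exact tendsto_nhds_unique (hf2 (l • v)) h2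

lemma L_add_smul {m n : ℕ} (A : Matrix (Fin m) (Fin n) ℝ) (i : Fin m)
    (x y : Fin n → ℝ) (t : ℝ) :
    (∑ j, A i j * (x + t • y) j) = (∑ j, A i j * x j) + t * ∑ j, A i j * y j := by
  rw [Finset.mul_sum, ← Finset.sum_add_distrib]
  apply Finset.sum_congr rfl; intro j _
  simp [Pi.add_apply, Pi.smul_apply, smul_eq_mul]; ring

lemma L_smul {m n : ℕ} (A : Matrix (Fin m) (Fin n) ℝ) (i : Fin m)
    (w : Fin n → ℝ) (t : ℝ) :
    (∑ j, A i j * (t • w) j) = t * ∑ j, A i j * w j := by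
  rw [Finset.mul_sum]
  apply Finset.sum_congr rfl; intro j _
  simp [Pi.smul_apply, smul_eq_mul]; ring

lemma L_sub {m n : ℕ} (A : Matrix (Fin m) (Fin n) ℝ) (i : Fin m)
    (x y : Fin n → ℝ) :
    (∑ j, A i j * (x - y) j) = (∑ j, A i j * x j) - ∑ j, A i j * y j := by
  rw [← Finset.sum_sub_distrib]
  apply Finset.sum_congr rfl; intro j _
  simp [Pi.sub_apply]; ring

lemma L_continuous {m n : ℕ} (A : Matrix (Fin m) (Fin n) ℝ) (i : Fin m) :
    Continuous (fun x : Fin n → ℝ => ∑ j, A i j * x j) :=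
  continuous_finset_sum _ fun j _ => continuous_const.mul (continuous_apply j)

-- convexity along the segment
lemma ray_mem {n : ℕ} {X : Set (Fin n → ℝ)} (hX : IsPolyhedron X)
    {xbar x : Fin n → ℝ} (hxbar : xbar ∈ X) (hx : x ∈ X) {t : ℝ}
    (ht0 : 0 ≤ t) (ht1 : t ≤ 1) : xbar + t • (x - xbar) ∈ X := by
  obtain ⟨m, A, b, rfl⟩ := hX
  intro i
  rw [L_add_smul]
  have h1 := hxbar i
  have h2 := hx i
  have : (∑ j, A i j * (x - xbar) j) = (∑ j, A i j * x j) - ∑ j, A i j * xbar j := by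
    rw [← Finset.sum_sub_distrib]
    apply Finset.sum_congr rfl; intro j _; simp [Pi.sub_apply]; ring
  rw [this]
  nlinarith

lemma sub_mem_tangent {n : ℕ} {X : Set (Fin n → ℝ)} (hX : IsPolyhedron X)
    {xbar x : Fin n → ℝ} (hxbar : xbar ∈ X) (hx : x ∈ X) :
    x - xbar ∈ TangentCone X xbar := by
  refine ⟨fun k => xbar + (1/((k:ℝ)+1)) • (x - xbar), fun k => 1/((k:ℝ)+1), ?_, ?_, ?_, ?_, ?_⟩
  · intro k
    apply ray_mem hX hxbar hx
    · positivity
    · rw [div_le_one (by positivity)]; linarith [Nat.cast_nonneg (α := ℝ) k]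
  · have h0 : Tendsto (fun k : ℕ => (1/((k:ℝ)+1)) • (x - xbar)) atTop (𝓝 ((0:ℝ) • (x - xbar))) :=
      tendsto_one_div_add_atTop_nhds_zero_nat.smul_const _
    simpa using tendsto_const_nhds.add h0
  · intro k; positivity
  · exact tendsto_one_div_add_atTop_nhds_zero_nat
  · have : ∀ k : ℕ, (1/((k:ℝ)+1))⁻¹ • ((xbar + (1/((k:ℝ)+1)) • (x - xbar)) - xbar) = x - xbar := by
      intro k
      have hk : (1/((k:ℝ)+1)) ≠ 0 := by positivity
      rw [add_sub_cancel_left, smul_smul, inv_mul_cancel₀ hk, one_smul]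
    simp only [this]
    exact tendsto_const_nhds

-- tangent vectors enter the polyhedron along a short ray
lemma tangent_ray {n : ℕ} {X : Set (Fin n → ℝ)} (hX : IsPolyhedron X)
    {xbar : Fin n → ℝ} (hxbar : xbar ∈ X) {v : Fin n → ℝ}
    (hv : v ∈ TangentCone X xbar) : ∃ t > (0:ℝ), xbar + t • v ∈ X := by
  obtain ⟨m, A, b, rfl⟩ := hX
  obtain ⟨xs, τ, hmem, hxs, hτpos, hτ0, hlim⟩ := hv
  -- for each i, eventually in 𝓝[>] 0, constraint i holds
  have key : ∀ i : Fin m, ∀ᶠ t in 𝓝[>] (0:ℝ),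
      (∑ j, A i j * (xbar + t • v) j) ≤ b i := by
    intro i
    rcases eq_or_lt_of_le (hxbar i) with hact | hslack
    · -- active: show ∑ A i j * v j ≤ 0
      have hAv : (∑ j, A i j * v j) ≤ 0 := by
        have hq : ∀ k, (∑ j, A i j * ((τ k)⁻¹ • (xs k - xbar)) j) ≤ 0 := by
          intro k
          have h1 : (∑ j, A i j * (xs k) j) ≤ b i := hmem k i
          have expand : (∑ j, A i j * ((τ k)⁻¹ • (xs k - xbar)) j)
              = (τ k)⁻¹ * ((∑ j, A i j * (xs k) j) - ∑ j, A i j * xbar j) := by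
            rw [L_smul, L_sub]
          rw [expand, hact]
          have := inv_nonneg.mpr (hτpos k).le
          nlinarith [hmem k i, inv_nonneg.mpr (hτpos k).le]
        have hcont : Tendsto (fun k => ∑ j, A i j * ((τ k)⁻¹ • (xs k - xbar)) j) atTop
            (𝓝 (∑ j, A i j * v j)) :=
          ((L_continuous A i).continuousAt.tendsto).comp hlim
        exact le_of_tendsto hcont (Eventually.of_forall hq)
      filter_upwards [self_mem_nhdsWithin] with t ht
      rw [L_add_smul]
      have : t * (∑ j, A i j * v j) ≤ 0 := mul_nonpos_of_nonneg_of_nonpos (le_of_lt ht) hAv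
      linarith [hxbar i]
    · -- slack: continuity
      have hc : Tendsto (fun t : ℝ => (∑ j, A i j * xbar j) + t * ∑ j, A i j * v j)
          (𝓝[>] 0) (𝓝 ((∑ j, A i j * xbar j) + 0 * ∑ j, A i j * v j)) :=
        (tendsto_const_nhds.add ((tendsto_id.mul tendsto_const_nhds))).mono_left
          nhdsWithin_le_nhds
      have hev := hc.eventually_lt_const (by simpa using hslack)
      filter_upwards [hev] with t ht
      rw [L_add_smul]; exact ht.le
  have hall : ∀ᶠ t in 𝓝[>] (0:ℝ), ∀ i, (∑ j, A i j * (xbar + t • v) j) ≤ b i :=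
    eventually_all.mpr key
  have hpos : ∀ᶠ t in 𝓝[>] (0:ℝ), 0 < t := self_mem_nhdsWithin
  obtain ⟨t, ht1, ht2⟩ := (hall.and hpos).exists
  exact ⟨t, ht2, ht1⟩


lemma ray_tendsto {n : ℕ} (v : Fin n → ℝ) :
    Tendsto (fun t : ℝ => (v, t)) (𝓝[>] (0:ℝ)) ((𝓝 v) ×ˢ (𝓝[>] 0)) :=
  tendsto_const_nhds.prodMk tendsto_id

lemma semidiff_ray {n : ℕ} {f : (Fin n → ℝ) → ℝ} {xbar v : Fin n → ℝ} {d : ℝ}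
    (h : SemidiffLim f xbar v d) :
    Tendsto (fun t : ℝ => (f (xbar + t • v) - f xbar) / t) (𝓝[>] (0:ℝ)) (𝓝 d) := by
  simpa [Function.comp_def] using h.comp (ray_tendsto v)

lemma semidiff2_ray {n : ℕ} {f : (Fin n → ℝ) → ℝ} {xbar : Fin n → ℝ}
    {f1 : (Fin n → ℝ) → ℝ} {v : Fin n → ℝ} {d : ℝ}
    (h : Semidiff2Lim f xbar f1 v d) :
    Tendsto (fun t : ℝ => 2 * (f (xbar + t • v) - f xbar - t * f1 v) / t ^ 2)
      (𝓝[>] (0:ℝ)) (𝓝 d) := by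
  simpa [Function.comp_def] using h.comp (ray_tendsto v)

lemma f1_zero {n : ℕ} (f : (Fin n → ℝ) → ℝ) (xbar : Fin n → ℝ) (f1 : (Fin n → ℝ) → ℝ)
    (hf1 : ∀ v, SemidiffLim f xbar v (f1 v)) : f1 0 = 0 := by
  have h := semidiff_ray (hf1 0)
  have h2 : Tendsto (fun _ : ℝ => (0:ℝ)) (𝓝[>] (0:ℝ)) (𝓝 (f1 0)) := by
    apply h.congr
    intro t
    simp
  exact tendsto_nhds_unique h2 tendsto_const_nhds

lemma f2_zero {n : ℕ} (f : (Fin n → ℝ) → ℝ) (xbar : Fin n → ℝ) (f1 f2 : (Fin n → ℝ) → ℝ)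
    (hf1 : ∀ v, SemidiffLim f xbar v (f1 v))
    (hf2 : ∀ w, Semidiff2Lim f xbar f1 w (f2 w)) : f2 0 = 0 := by
  have h := semidiff2_ray (hf2 0)
  have h2 : Tendsto (fun _ : ℝ => (0:ℝ)) (𝓝[>] (0:ℝ)) (𝓝 (f2 0)) := by
    apply h.congr
    intro t
    simp [f1_zero f xbar f1 hf1]
  exact tendsto_nhds_unique h2 tendsto_const_nhds

/-- a1 → a3 (first-order part also used for b1). -/
lemma a1_to_a3 {n : ℕ} {X : Set (Fin n → ℝ)} (hX : IsPolyhedron X)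
    {f : (Fin n → ℝ) → ℝ} {xbar : Fin n → ℝ} (hxbar : xbar ∈ X)
    {f1 f2 : (Fin n → ℝ) → ℝ}
    (hf1 : ∀ v, SemidiffLim f xbar v (f1 v))
    (hf2 : ∀ w, Semidiff2Lim f xbar f1 w (f2 w))
    (ha1 : IsLocMin' f X xbar) :
    (∀ x ∈ X, 0 ≤ f1 (x - xbar)) ∧
      (∀ x ∈ X, x ≠ xbar → f1 (x - xbar) = 0 → 0 ≤ f2 (x - xbar)) := by
  obtain ⟨-, ε, hε, hmin⟩ := ha1
  have key : ∀ x ∈ X, ∀ᶠ t in 𝓝[>] (0:ℝ),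
      (xbar + t • (x - xbar) ∈ X ∧ f xbar ≤ f (xbar + t • (x - xbar))) := by
    intro x hx
    set v := x - xbar with hv
    have hδ : (0:ℝ) < min 1 (ε / (n2 v + 1)) := by
      apply lt_min one_pos
      apply div_pos hε
      linarith [n2_nonneg v]
    filter_upwards [Ioo_mem_nhdsGT_of_mem ⟨le_refl (0:ℝ), hδ⟩] with t ht
    have ht1 : t ≤ 1 := le_trans ht.2.le (min_le_left _ _)
    have htε : t < ε / (n2 v + 1) := lt_of_lt_of_le ht.2 (min_le_right _ _)
    have hmem : xbar + t • v ∈ X := ray_mem hX hxbar hx ht.1.le ht1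
    have hn2 : n2 ((xbar + t • v) - xbar) < ε := by
      rw [add_sub_cancel_left, n2_smul, abs_of_pos ht.1]
      have h1 : t * (n2 v + 1) < ε := by
        rw [lt_div_iff₀ (by linarith [n2_nonneg v])] at htε
        exact htε
      nlinarith [n2_nonneg v, ht.1]
    exact ⟨hmem, hmin _ hmem hn2⟩
  constructor
  · intro x hx
    set v := x - xbar with hv
    have hq : Tendsto (fun t : ℝ => (f (xbar + t • v) - f xbar) / t) (𝓝[>] (0:ℝ))
        (𝓝 (f1 v)) := semidiff_ray (hf1 v)
    apply ge_of_tendsto hq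
    filter_upwards [key x hx, self_mem_nhdsWithin] with t ht htpos
    exact div_nonneg (by linarith [ht.2]) (le_of_lt htpos)
  · intro x hx hne h10
    set v := x - xbar with hv
    have hq : Tendsto (fun t : ℝ => 2 * (f (xbar + t • v) - f xbar - t * f1 v) / t ^ 2)
        (𝓝[>] (0:ℝ)) (𝓝 (f2 v)) := semidiff2_ray (hf2 v)
    apply ge_of_tendsto hq
    filter_upwards [key x hx, self_mem_nhdsWithin] with t ht htpos
    rw [h10]
    apply div_nonneg _ (by positivity)
    nlinarith [ht.2]

/-- b1 → b3 second-order part. -/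
lemma b1_to_b3 {n : ℕ} {X : Set (Fin n → ℝ)} (hX : IsPolyhedron X)
    {f : (Fin n → ℝ) → ℝ} {xbar : Fin n → ℝ} (hxbar : xbar ∈ X)
    {f1 f2 : (Fin n → ℝ) → ℝ}
    (hf1 : ∀ v, SemidiffLim f xbar v (f1 v))
    (hf2 : ∀ w, Semidiff2Lim f xbar f1 w (f2 w))
    (hb1 : IsStrongLocMin f X xbar) :
    (∀ x ∈ X, 0 ≤ f1 (x - xbar)) ∧
      (∀ x ∈ X, x ≠ xbar → f1 (x - xbar) = 0 → 0 < f2 (x - xbar)) := by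
  obtain ⟨-, c, hc, ε, hε, hmin⟩ := hb1
  have ha1 : IsLocMin' f X xbar := by
    refine ⟨hxbar, ε, hε, fun y hy hn => ?_⟩
    have := hmin y hy hn
    nlinarith [n2_nonneg (y - xbar)]
  refine ⟨(a1_to_a3 hX hxbar hf1 hf2 ha1).1, ?_⟩
  intro x hx hne h10
  set v := x - xbar with hv
  have hvne : v ≠ 0 := sub_ne_zero.mpr hne
  have hvpos : 0 < n2 v := n2_pos hvne
  have hq : Tendsto (fun t : ℝ => 2 * (f (xbar + t • v) - f xbar - t * f1 v) / t ^ 2)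
      (𝓝[>] (0:ℝ)) (𝓝 (f2 v)) := semidiff2_ray (hf2 v)
  have hlow : ∀ᶠ t in 𝓝[>] (0:ℝ),
      2 * c * n2 v ^ 2 ≤ 2 * (f (xbar + t • v) - f xbar - t * f1 v) / t ^ 2 := by
    have hδ : (0:ℝ) < min 1 (ε / (n2 v + 1)) := by
      apply lt_min one_pos
      exact div_pos hε (by linarith)
    filter_upwards [Ioo_mem_nhdsGT_of_mem ⟨le_refl (0:ℝ), hδ⟩] with t ht
    have ht1 : t ≤ 1 := le_trans ht.2.le (min_le_left _ _)
    have htε : t < ε / (n2 v + 1) := lt_of_lt_of_le ht.2 (min_le_right _ _)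
    have hmem : xbar + t • v ∈ X := ray_mem hX hxbar hx ht.1.le ht1
    have hn2 : n2 ((xbar + t • v) - xbar) = t * n2 v := by
      rw [add_sub_cancel_left, n2_smul, abs_of_pos ht.1]
    have hn2lt : n2 ((xbar + t • v) - xbar) < ε := by
      rw [hn2]
      have h1 : t * (n2 v + 1) < ε := by
        rw [lt_div_iff₀ (by linarith)] at htε
        exact htε
      nlinarith [ht.1]
    have := hmin _ hmem hn2lt
    rw [hn2] at this
    rw [h10, le_div_iff₀ (pow_pos ht.1 2)]
    nlinarith [ht.1]
  have h2 : 2 * c * n2 v ^ 2 ≤ f2 v := ge_of_tendsto hq hlow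
  nlinarith [mul_pos hc (pow_pos hvpos 2)]

lemma a3_to_a2 {n : ℕ} {X : Set (Fin n → ℝ)} (hX : IsPolyhedron X)
    {f : (Fin n → ℝ) → ℝ} {xbar : Fin n → ℝ} (hxbar : xbar ∈ X)
    {f1 f2 : (Fin n → ℝ) → ℝ}
    (hf1 : ∀ v, SemidiffLim f xbar v (f1 v))
    (hf2 : ∀ w, Semidiff2Lim f xbar f1 w (f2 w))
    (ha3 : (∀ x ∈ X, 0 ≤ f1 (x - xbar)) ∧
      (∀ x ∈ X, x ≠ xbar → f1 (x - xbar) = 0 → 0 ≤ f2 (x - xbar))) :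
    (∀ v ∈ TangentCone X xbar, 0 ≤ f1 v) ∧
      (∀ v ∈ TangentCone X xbar, f1 v = 0 → 0 ≤ f2 v) := by
  constructor
  · intro v hv
    obtain ⟨t, ht, hmem⟩ := tangent_ray hX hxbar hv
    have h1 := ha3.1 _ hmem
    rw [add_sub_cancel_left, hom1 f xbar f1 hf1 t ht v] at h1
    exact nonneg_of_mul_nonneg_right h1 ht
  · intro v hv h10
    by_cases hv0 : v = 0
    · rw [hv0, f2_zero f xbar f1 f2 hf1 hf2]
    obtain ⟨t, ht, hmem⟩ := tangent_ray hX hxbar hv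
    have hne : xbar + t • v ≠ xbar := by
      intro h
      apply hv0
      have : t • v = 0 := by
        have := congrArg (fun z => z - xbar) h
        simpa using this
      rcases smul_eq_zero.mp this with h' | h'
      · exact absurd h' ht.ne'
      · exact h'
    have h2 := ha3.2 _ hmem hne (by
      rw [add_sub_cancel_left, hom1 f xbar f1 hf1 t ht v, h10, mul_zero])
    rw [add_sub_cancel_left, hom2 f xbar f1 f2 hf1 hf2 t ht v] at h2
    exact nonneg_of_mul_nonneg_right h2 (pow_pos ht 2)

lemma b3_to_b2 {n : ℕ} {X : Set (Fin n → ℝ)} (hX : IsPolyhedron X)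
    {f : (Fin n → ℝ) → ℝ} {xbar : Fin n → ℝ} (hxbar : xbar ∈ X)
    {f1 f2 : (Fin n → ℝ) → ℝ}
    (hf1 : ∀ v, SemidiffLim f xbar v (f1 v))
    (hf2 : ∀ w, Semidiff2Lim f xbar f1 w (f2 w))
    (hb3 : (∀ x ∈ X, 0 ≤ f1 (x - xbar)) ∧
      (∀ x ∈ X, x ≠ xbar → f1 (x - xbar) = 0 → 0 < f2 (x - xbar))) :
    (∀ v ∈ TangentCone X xbar, 0 ≤ f1 v) ∧
      (∀ v ∈ TangentCone X xbar, v ≠ 0 → f1 v = 0 → 0 < f2 v) := by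
  refine ⟨(a3_to_a2 hX hxbar hf1 hf2 ⟨hb3.1, fun x hx hne h => (hb3.2 x hx hne h).le⟩).1, ?_⟩
  intro v hv hv0 h10
  obtain ⟨t, ht, hmem⟩ := tangent_ray hX hxbar hv
  have hne : xbar + t • v ≠ xbar := by
    intro h
    apply hv0
    have : t • v = 0 := by
      have := congrArg (fun z => z - xbar) h
      simpa using this
    rcases smul_eq_zero.mp this with h' | h'
    · exact absurd h' ht.ne'
    · exact h'
  have h2 := hb3.2 _ hmem hne (by
    rw [add_sub_cancel_left, hom1 f xbar f1 hf1 t ht v, h10, mul_zero])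
  rw [add_sub_cancel_left, hom2 f xbar f1 f2 hf1 hf2 t ht v] at h2
  nlinarith [pow_pos ht 2]

lemma a2_to_a3 {n : ℕ} {X : Set (Fin n → ℝ)} (hX : IsPolyhedron X)
    {f : (Fin n → ℝ) → ℝ} {xbar : Fin n → ℝ} (hxbar : xbar ∈ X)
    {f1 f2 : (Fin n → ℝ) → ℝ}
    (ha2 : (∀ v ∈ TangentCone X xbar, 0 ≤ f1 v) ∧
      (∀ v ∈ TangentCone X xbar, f1 v = 0 → 0 ≤ f2 v)) :
    (∀ x ∈ X, 0 ≤ f1 (x - xbar)) ∧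
      (∀ x ∈ X, x ≠ xbar → f1 (x - xbar) = 0 → 0 ≤ f2 (x - xbar)) :=
  ⟨fun x hx => ha2.1 _ (sub_mem_tangent hX hxbar hx),
   fun x hx _ h => ha2.2 _ (sub_mem_tangent hX hxbar hx) h⟩

lemma b2_to_b3 {n : ℕ} {X : Set (Fin n → ℝ)} (hX : IsPolyhedron X)
    {f : (Fin n → ℝ) → ℝ} {xbar : Fin n → ℝ} (hxbar : xbar ∈ X)
    {f1 f2 : (Fin n → ℝ) → ℝ}
    (hb2 : (∀ v ∈ TangentCone X xbar, 0 ≤ f1 v) ∧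
      (∀ v ∈ TangentCone X xbar, v ≠ 0 → f1 v = 0 → 0 < f2 v)) :
    (∀ x ∈ X, 0 ≤ f1 (x - xbar)) ∧
      (∀ x ∈ X, x ≠ xbar → f1 (x - xbar) = 0 → 0 < f2 (x - xbar)) :=
  ⟨fun x hx => hb2.1 _ (sub_mem_tangent hX hxbar hx),
   fun x hx hne h => hb2.2 _ (sub_mem_tangent hX hxbar hx) (sub_ne_zero.mpr hne) h⟩

lemma b2_to_b1 {n : ℕ} {X : Set (Fin n → ℝ)} (hX : IsPolyhedron X)
    {f : (Fin n → ℝ) → ℝ} {xbar : Fin n → ℝ} (hxbar : xbar ∈ X)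
    {f1 f2 : (Fin n → ℝ) → ℝ}
    (hf1 : ∀ v, SemidiffLim f xbar v (f1 v))
    (hf2 : ∀ w, Semidiff2Lim f xbar f1 w (f2 w))
    (hb2 : (∀ v ∈ TangentCone X xbar, 0 ≤ f1 v) ∧
      (∀ v ∈ TangentCone X xbar, v ≠ 0 → f1 v = 0 → 0 < f2 v)) :
    IsStrongLocMin f X xbar := by
  by_contra hb1
  have hneg : ∀ c > (0:ℝ), ∀ ε > (0:ℝ), ∃ y ∈ X, n2 (y - xbar) < ε ∧
      f y < f xbar + c * n2 (y - xbar) ^ 2 := by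
    intro c hc ε hε
    by_contra h
    push_neg at h
    exact hb1 ⟨hxbar, c, hc, ε, hε, fun y hy hn => h y hy hn⟩
  have hseq : ∀ k : ℕ, ∃ y ∈ X, n2 (y - xbar) < 1/((k:ℝ)+1) ∧
      f y < f xbar + (1/((k:ℝ)+1)) * n2 (y - xbar) ^ 2 :=
    fun k => hneg _ (by positivity) _ (by positivity)
  choose x hxX hxlt hxf using hseq
  have hne : ∀ k, x k ≠ xbar := by
    intro k h
    have := hxf k
    rw [h, sub_self, n2_zero] at this
    simp at this
  set τ : ℕ → ℝ := fun k => n2 (x k - xbar) with hτdef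
  have hτpos : ∀ k, 0 < τ k := fun k => n2_pos (sub_ne_zero.mpr (hne k))
  set v : ℕ → (Fin n → ℝ) := fun k => (τ k)⁻¹ • (x k - xbar) with hvdef
  have hn2v : ∀ k, n2 (v k) = 1 := by
    intro k
    rw [hvdef]
    simp only
    rw [n2_smul, abs_of_pos (inv_pos.mpr (hτpos k)), inv_mul_cancel₀ (hτpos k).ne']
  have hKc : IsCompact {w : Fin n → ℝ | n2 w = 1} := by
    apply IsCompact.of_isClosed_subset (isCompact_closedBall (0 : Fin n → ℝ) 1)
    · exact isClosed_eq n2_continuous continuous_const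
    · intro w hw
      rw [Metric.mem_closedBall, dist_zero_right]
      calc ‖w‖ ≤ n2 w := norm_le_n2 w
      _ = 1 := hw
  obtain ⟨vlim, hvlim1, φ, hφ, hvconv⟩ := hKc.tendsto_subseq (fun k => hn2v k)
  have hvne : vlim ≠ 0 := by
    intro h
    rw [h] at hvlim1
    rw [Set.mem_setOf_eq, n2_zero] at hvlim1
    norm_num at hvlim1
  have hcast : ∀ k : ℕ, (1:ℝ)/((φ k:ℝ)+1) ≤ 1/((k:ℝ)+1) := by
    intro k
    apply one_div_le_one_div_of_le (by positivity)
    have : k ≤ φ k := hφ.le_apply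
    have : (k:ℝ) ≤ (φ k:ℝ) := by exact_mod_cast this
    linarith
  have hbnd : ∀ k, τ (φ k) ≤ 1/((k:ℝ)+1) :=
    fun k => le_trans (hxlt (φ k)).le (hcast k)
  have hτ0 : Tendsto (fun k => τ (φ k)) atTop (𝓝 0) :=
    squeeze_zero (fun k => (hτpos (φ k)).le) hbnd tendsto_one_div_add_atTop_nhds_zero_nat
  have hx0 : Tendsto (fun k => x (φ k)) atTop (𝓝 xbar) := by
    rw [tendsto_iff_norm_sub_tendsto_zero]
    apply squeeze_zero (fun k => norm_nonneg _)
      (fun k => le_trans (norm_le_n2 _) (hbnd k)) tendsto_one_div_add_atTop_nhds_zero_nat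
  have hvT : vlim ∈ TangentCone X xbar :=
    ⟨fun k => x (φ k), fun k => τ (φ k), fun k => hxX _, hx0, fun k => hτpos _, hτ0, hvconv⟩
  have hprod : Tendsto (fun k => (v (φ k), τ (φ k))) atTop ((𝓝 vlim) ×ˢ (𝓝[>] 0)) := by
    apply Tendsto.prodMk hvconv
    rw [tendsto_nhdsWithin_iff]
    exact ⟨hτ0, Eventually.of_forall fun k => hτpos _⟩
  have hxk : ∀ k, xbar + τ k • v k = x k := by
    intro k
    rw [hvdef]
    simp only
    rw [smul_smul, mul_inv_cancel₀ (hτpos k).ne', one_smul, add_sub_cancel]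
  -- first order: f1 vlim = 0
  have hq1 : Tendsto (fun k => (f (xbar + τ (φ k) • v (φ k)) - f xbar) / τ (φ k)) atTop
      (𝓝 (f1 vlim)) := by
    simpa [Function.comp_def] using (hf1 vlim).comp hprod
  have hle1 : f1 vlim ≤ 0 := by
    apply le_of_tendsto_of_tendsto' hq1 hτ0
    intro k
    rw [hxk, div_le_iff₀ (hτpos _)]
    have h1 := hxf (φ k)
    have h2 := hcast k
    have h3 : (1:ℝ)/((k:ℝ)+1) ≤ 1 := by
      rw [div_le_one (by positivity)]
      linarith [Nat.cast_nonneg (α := ℝ) k]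
    nlinarith [sq_nonneg (τ (φ k)), hτpos (φ k)]
  have h0 : f1 vlim = 0 := le_antisymm hle1 (hb2.1 vlim hvT)
  -- f1 (v k) ≥ 0
  have hf1v : ∀ k, 0 ≤ f1 (v k) := by
    intro k
    have h1 : 0 ≤ f1 (x k - xbar) := hb2.1 _ (sub_mem_tangent hX hxbar (hxX k))
    have h2 := hom1 f xbar f1 hf1 (τ k)⁻¹ (inv_pos.mpr (hτpos k)) (x k - xbar)
    rw [hvdef]
    simp only
    rw [h2]
    exact mul_nonneg (inv_pos.mpr (hτpos k)).le h1
  -- second order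
  have hq2 : Tendsto (fun k =>
      2 * (f (xbar + τ (φ k) • v (φ k)) - f xbar - τ (φ k) * f1 (v (φ k))) / (τ (φ k)) ^ 2)
      atTop (𝓝 (f2 vlim)) := by
    simpa [Function.comp_def] using (hf2 vlim).comp hprod
  have hg0 : Tendsto (fun k : ℕ => 2 * (1/((k:ℝ)+1))) atTop (𝓝 0) := by
    have := tendsto_one_div_add_atTop_nhds_zero_nat.const_mul (2:ℝ)
    simpa using this
  have hle2 : f2 vlim ≤ 0 := by
    apply le_of_tendsto_of_tendsto' hq2 hg0
    intro k
    rw [hxk, div_le_iff₀ (pow_pos (hτpos _) 2)]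
    have h1 := hxf (φ k)
    have h2 := mul_le_mul_of_nonneg_right (hcast k) (sq_nonneg (τ (φ k)))
    have h3 : 0 ≤ τ (φ k) * f1 (v (φ k)) := mul_nonneg (hτpos _).le (hf1v _)
    nlinarith [sq_nonneg (τ (φ k))]
  exact absurd (hb2.2 vlim hvT hvne h0) (by linarith)

/-- Second-order optimality conditions for minimizing a locally Lipschitz,
twice semidifferentiable function over a polyhedron:
(b1) ⇔ (b2) ⇔ (b3) ⇒ (a1) ⇒ (a2) ⇔ (a3), where `f1 = f'(xbar;·)` and `f2 = f⁽²⁾(xbar;·)`. -/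
theorem stmt1 {n : ℕ} (Ω X : Set (Fin n → ℝ)) (hΩ : IsOpen Ω) (hXΩ : X ⊆ Ω)
    (hX : IsPolyhedron X)
    (f : (Fin n → ℝ) → ℝ) (xbar : Fin n → ℝ) (hxbar : xbar ∈ X)
    -- f is locally Lipschitz continuous near xbar
    (hLip : ∃ ε > (0:ℝ), ∃ K : ℝ, ∀ y z : Fin n → ℝ,
      n2 (y - xbar) < ε → n2 (z - xbar) < ε → |f y - f z| ≤ K * n2 (y - z))
    -- f is twice semidifferentiable at xbar, with f'(xbar;·) = f1 and f⁽²⁾(xbar;·) = f2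
    (f1 f2 : (Fin n → ℝ) → ℝ)
    (hf1 : ∀ v, SemidiffLim f xbar v (f1 v))
    (hf2 : ∀ w, Semidiff2Lim f xbar f1 w (f2 w)) :
    let a1 := IsLocMin' f X xbar
    let a2 := (∀ v ∈ TangentCone X xbar, 0 ≤ f1 v) ∧
      (∀ v ∈ TangentCone X xbar, f1 v = 0 → 0 ≤ f2 v)
    let a3 := (∀ x ∈ X, 0 ≤ f1 (x - xbar)) ∧
      (∀ x ∈ X, x ≠ xbar → f1 (x - xbar) = 0 → 0 ≤ f2 (x - xbar))
    let b1 := IsStrongLocMin f X xbar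
    let b2 := (∀ v ∈ TangentCone X xbar, 0 ≤ f1 v) ∧
      (∀ v ∈ TangentCone X xbar, v ≠ 0 → f1 v = 0 → 0 < f2 v)
    let b3 := (∀ x ∈ X, 0 ≤ f1 (x - xbar)) ∧
      (∀ x ∈ X, x ≠ xbar → f1 (x - xbar) = 0 → 0 < f2 (x - xbar))
    (b1 ↔ b2) ∧ (b2 ↔ b3) ∧ (b1 → a1) ∧ (a1 → a2) ∧ (a2 ↔ a3) := by
  intro a1 a2 a3 b1 b2 b3
  have hb1a1 : b1 → a1 := by
    rintro ⟨hm, c, hc, ε, hε, hmin⟩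
    refine ⟨hm, ε, hε, fun y hy hn => ?_⟩
    have := hmin y hy hn
    nlinarith [n2_nonneg (y - xbar)]
  refine ⟨?_, ⟨fun h => b2_to_b3 (f := f) hX hxbar h, fun h => b3_to_b2 hX hxbar hf1 hf2 h⟩,
    hb1a1, ?_, ⟨fun h => a2_to_a3 (f := f) hX hxbar h, fun h => a3_to_a2 hX hxbar hf1 hf2 h⟩⟩
  · constructor
    · intro h
      exact b3_to_b2 hX hxbar hf1 hf2 (b1_to_b3 hX hxbar hf1 hf2 h)
    · intro h
      exact b2_to_b1 hX hxbar hf1 hf2 h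
  · intro h
    exact a3_to_a2 hX hxbar hf1 hf2 (a1_to_a3 hX hxbar hf1 hf2 h)
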